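/- arXiv:2305.08883 — 3 statements merged into one kernel-verified Lean document; each statement's English description precedes it below -/
import Mathlib

section
/- Let z ∈ ℝᶜ with pairwise distinct entries and define s_i = Σ_{j≠i} (1 + sgn(z_i − z_j))/2. Then the one-hot encoding obtained by applying the indicator of {t : t ≥ c − 1} to s (i.e., m_i = 1 if s_i ≥ c − 1 and 0 otherwise) equals the argmax one-hot vector: m_i = 1 iff z_i = max_j z_j. -/
open Finset

noncomputable def sgn (t : ℝ) : ℝ := if 0 < t then 1 else -1

theorem onehot_threshold_is_argmax
    {c : ℕ} (hc : 0 < c) (z : Fin c → ℝ) (hinj : Function.Injective z)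
    (s m : Fin c → ℝ)
    (hs : ∀ i, s i = ∑ j ∈ univ.filter (· ≠ i), (1 + sgn (z i - z j)) / 2)
    (hm : ∀ i, m i = if (c : ℝ) - 1 ≤ s i then 1 else 0) :
    ∀ i, m i = 1 ↔ ∀ j, z j ≤ z i := by
  intro i
  have hterm : ∀ j ∈ univ.filter (· ≠ i), (1 + sgn (z i - z j)) / 2
      = if z j < z i then (1:ℝ) else 0 := by
    intro j hj
    simp only [mem_filter] at hj
    have hne : z i ≠ z j := fun h => hj.2 (hinj h.symm)
    unfold sgn
    rcases lt_or_gt_of_ne hne with h | h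
    · rw [if_neg (by linarith), if_neg (by linarith)]; ring
    · rw [if_pos (by linarith), if_pos (by linarith)]; ring
  have hs' : s i = ∑ j ∈ univ.filter (· ≠ i), (if z j < z i then (1:ℝ) else 0) := by
    rw [hs i]; exact Finset.sum_congr rfl hterm
  have hcard : ((univ.filter (· ≠ i)).card : ℝ) = (c : ℝ) - 1 := by
    rw [Finset.filter_ne', Finset.card_erase_of_mem (mem_univ i)]
    simp [Nat.cast_sub hc]
  constructor
  · intro hmi j
    rw [hm i] at hmi
    have hle : (c:ℝ) - 1 ≤ s i := by
      by_contra h; rw [if_neg h] at hmi; norm_num at hmi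
    rcases eq_or_ne j i with rfl | hji
    · exact le_refl _
    by_contra hlt; push_neg at hlt
    have hjmem : j ∈ univ.filter (· ≠ i) := by simp [hji]
    have hsplit : s i = (if z j < z i then (1:ℝ) else 0)
        + ∑ k ∈ (univ.filter (· ≠ i)).erase j, (if z k < z i then (1:ℝ) else 0) := by
      rw [hs']; exact (Finset.add_sum_erase _ _ hjmem).symm
    have hzero : (if z j < z i then (1:ℝ) else 0) = 0 := if_neg (not_lt.mpr hlt.le)
    have hbound : ∑ k ∈ (univ.filter (· ≠ i)).erase j, (if z k < z i then (1:ℝ) else 0)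
        ≤ (((univ.filter (· ≠ i)).erase j).card : ℝ) := by
      calc _ ≤ ∑ k ∈ (univ.filter (· ≠ i)).erase j, (1:ℝ) := by
              apply Finset.sum_le_sum; intro k _; split <;> norm_num
        _ = _ := by simp
    have hcard2 : (((univ.filter (· ≠ i)).erase j).card : ℝ)
        = ((univ.filter (· ≠ i)).card : ℝ) - 1 := by
      rw [Finset.card_erase_of_mem hjmem]
      have : 1 ≤ (univ.filter (· ≠ i)).card := Finset.card_pos.mpr ⟨j, hjmem⟩
      push_cast [Nat.cast_sub this]; ring
    rw [hcard] at hcard2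
    linarith [hsplit, hbound, hcard2, hzero]
  · intro hall
    have : s i = (c:ℝ) - 1 := by
      rw [hs']
      have : ∀ j ∈ univ.filter (· ≠ i), (if z j < z i then (1:ℝ) else 0) = 1 := by
        intro j hj
        simp only [mem_filter] at hj
        exact if_pos (lt_of_le_of_ne (hall j) (fun h => hj.2 (hinj h)))
      rw [Finset.sum_congr rfl this]
      simp [hcard]
    rw [hm i, this, if_pos le_rfl]
end

section
/- Suppose g : ℝ → ℝ satisfies |g(t) − sgn(t)| ≤ ψ for all t ∈ [−1,−φ] ∪ [φ,1], with 0 < ψ < 1/(c−1) for c ≥ 2. Let z ∈ ℝᶜ with all pairwise normalized differences d_{ij} = (z_i − z_j)/(Z_max − Z_min) lying in [−1,−φ] ∪ [φ,1]. Define approximate scores ŝ_i = Σ_{j≠i} (1 + g(d_{ij}))/2 and exact scores s_i = Σ_{j≠i} (1 + sgn(d_{ij}))/2. Then |ŝ_i − s_i| ≤ (c−1)ψ/2 < 1/2 for every i; in particular, the index attaining ŝ_i > c − 1 − 1/2 is unique and equals the argmax of z. -/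
open Finset

theorem approx_scores_close_and_argmax
    {c : ℕ} (hc : 2 ≤ c) (Zmin Zmax : ℝ) (hZ : Zmin < Zmax)
    (φ ψ : ℝ) (hφ0 : 0 < φ) (hφ1 : φ ≤ 1) (hψ0 : 0 < ψ)
    (hψ : ψ < 1 / ((c : ℝ) - 1))
    (g : ℝ → ℝ)
    (hg : ∀ t, t ∈ Set.Icc (-1 : ℝ) (-φ) ∪ Set.Icc φ 1 → |g t - sgn t| ≤ ψ)
    (z : Fin c → ℝ)
    (hz : ∀ i j, i ≠ j →
      (z i - z j) / (Zmax - Zmin) ∈ Set.Icc (-1 : ℝ) (-φ) ∪ Set.Icc φ 1)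
    (shat s : Fin c → ℝ)
    (hshat : ∀ i, shat i =
      ∑ j ∈ univ.filter (· ≠ i), (1 + g ((z i - z j) / (Zmax - Zmin))) / 2)
    (hs : ∀ i, s i =
      ∑ j ∈ univ.filter (· ≠ i), (1 + sgn ((z i - z j) / (Zmax - Zmin))) / 2) :
    (∀ i, |shat i - s i| ≤ ((c : ℝ) - 1) * ψ / 2) ∧
    ((c : ℝ) - 1) * ψ / 2 < 1 / 2 ∧
    (∀ i, (c : ℝ) - 1 - 1 / 2 < shat i ↔ ∀ j, z j ≤ z i) := by
  have hZd : (0:ℝ) < Zmax - Zmin := sub_pos.2 hZ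
  have hc2 : (2:ℝ) ≤ (c:ℝ) := by exact_mod_cast hc
  have hc1 : (0:ℝ) < (c:ℝ) - 1 := by linarith
  set d : Fin c → Fin c → ℝ := fun i j => (z i - z j) / (Zmax - Zmin) with hd
  -- sign characterization
  have hsgn : ∀ i j, i ≠ j → sgn (d i j) = if z j < z i then 1 else -1 := by
    intro i j hij
    rcases hz i j hij with h | h
    · have hlt : d i j < 0 := lt_of_le_of_lt h.2 (by linarith)
      have hzlt : z i - z j < 0 := by
        rcases div_neg_iff.mp hlt with ⟨_, hb⟩ | ⟨ha, _⟩
        · linarith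
        · exact ha
      rw [sgn, if_neg (not_lt.2 hlt.le), if_neg (by push_neg; linarith)]
    · have hlt : 0 < d i j := lt_of_lt_of_le hφ0 h.1
      have hzlt : 0 < z i - z j := by
        rcases div_pos_iff.mp hlt with ⟨ha, _⟩ | ⟨_, hb⟩
        · exact ha
        · linarith
      rw [sgn, if_pos hlt, if_pos (by linarith)]
  have hterm : ∀ i j, i ≠ j →
      (1 + sgn (d i j)) / 2 = if z j < z i then (1:ℝ) else 0 := by
    intro i j hij
    rw [hsgn i j hij]
    split <;> norm_num
  have hne : ∀ i j, i ≠ j → z i ≠ z j := by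
    intro i j hij heq
    have h0 : (z i - z j) / (Zmax - Zmin) = 0 := by rw [heq]; simp
    rcases hz i j hij with h | h <;> rw [h0] at h
    · linarith [h.2]
    · linarith [h.1]
  have hcard : ∀ i : Fin c, (univ.filter (· ≠ i)).card = c - 1 := by
    intro i
    rw [filter_ne', card_erase_of_mem (mem_univ i), card_univ, Fintype.card_fin]
  have hcast : ∀ i : Fin c, ((univ.filter (· ≠ i)).card : ℝ) = (c:ℝ) - 1 := by
    intro i
    rw [hcard i, Nat.cast_sub (by omega)]
    simp
  have hsval : ∀ i, s i = ∑ j ∈ univ.filter (· ≠ i),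
      (if z j < z i then (1:ℝ) else 0) := by
    intro i
    rw [hs i]
    refine Finset.sum_congr rfl ?_
    intro j hj
    have hji : j ≠ i := (mem_filter.mp hj).2
    exact hterm i j (Ne.symm hji)
  have part1 : ∀ i, |shat i - s i| ≤ ((c : ℝ) - 1) * ψ / 2 := by
    intro i
    rw [hshat i, hs i, ← Finset.sum_sub_distrib]
    calc |∑ j ∈ univ.filter (· ≠ i),
          ((1 + g (d i j)) / 2 - (1 + sgn (d i j)) / 2)|
        ≤ ∑ j ∈ univ.filter (· ≠ i),
          |(1 + g (d i j)) / 2 - (1 + sgn (d i j)) / 2| :=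
          Finset.abs_sum_le_sum_abs _ _
      _ ≤ ∑ j ∈ univ.filter (· ≠ i), ψ / 2 := by
          refine Finset.sum_le_sum ?_
          intro j hj
          have hji : j ≠ i := (mem_filter.mp hj).2
          have hb := hg (d i j) (hz i j (Ne.symm hji))
          have heq : (1 + g (d i j)) / 2 - (1 + sgn (d i j)) / 2
              = (g (d i j) - sgn (d i j)) / 2 := by ring
          rw [heq, abs_div, abs_two]
          linarith
      _ = ((c : ℝ) - 1) * ψ / 2 := by
          rw [Finset.sum_const, nsmul_eq_mul, hcast i]; ring
  have hprod : ψ * ((c:ℝ) - 1) < 1 := (lt_div_iff₀ hc1).mp hψ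
  have part2 : ((c : ℝ) - 1) * ψ / 2 < 1 / 2 := by nlinarith
  refine ⟨part1, part2, ?_⟩
  intro i
  constructor
  · intro hgt j
    by_contra hcon
    push_neg at hcon
    have hji : j ≠ i := by
      intro h; rw [h] at hcon; exact lt_irrefl _ hcon
    have hjmem : j ∈ univ.filter (· ≠ i) := mem_filter.2 ⟨mem_univ _, hji⟩
    have hbound : s i ≤ (c:ℝ) - 2 := by
      rw [hsval i, ← Finset.add_sum_erase _ _ hjmem, if_neg (not_lt.2 hcon.le)]
      have h1 : ∑ k ∈ (univ.filter (· ≠ i)).erase j,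
          (if z k < z i then (1:ℝ) else 0)
          ≤ ∑ k ∈ (univ.filter (· ≠ i)).erase j, (1:ℝ) := by
        refine Finset.sum_le_sum ?_
        intro k _
        split <;> norm_num
      have h2 : ((((univ.filter (· ≠ i)).erase j).card : ℝ)) = (c:ℝ) - 2 := by
        have hce : ((univ.filter (· ≠ i)).erase j).card = c - 2 := by
          rw [card_erase_of_mem hjmem, hcard i]; omega
        rw [hce, Nat.cast_sub (by omega)]
        push_cast
        ring
      rw [Finset.sum_const, nsmul_eq_mul, mul_one, h2] at h1
      linarith
    have habs := abs_le.mp (part1 i)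
    linarith [habs.1, habs.2]
  · intro hmax
    have hsv : s i = (c:ℝ) - 1 := by
      rw [hsval i]
      have : ∀ j ∈ univ.filter (· ≠ i),
          (if z j < z i then (1:ℝ) else 0) = 1 := by
        intro j hj
        have hji : j ≠ i := (mem_filter.mp hj).2
        have : z j < z i := lt_of_le_of_ne (hmax j) (Ne.symm (hne i j (Ne.symm hji)))
        rw [if_pos this]
      rw [Finset.sum_congr rfl this, Finset.sum_const, nsmul_eq_mul, mul_one,
        hcast i]
    have habs := abs_le.mp (part1 i)
    rw [hsv] at habs
    linarith [habs.1, habs.2, part2]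
end

section
/- Let X ~ Binomial(n, p⋆) and let β be the upper endpoint of the one-sided Clopper–Pearson interval at level 1−p, i.e., β = sup{q ∈ [0,1] : P(Binomial(n,q) ≤ k) ≥ p} where k is the observed count. Then P(p⋆ > β) ≤ p, i.e., the Clopper–Pearson upper bound covers the true parameter with probability at least 1 − p. -/
open Finset

/-- CDF of a Binomial(n, q) distribution evaluated at k. -/
noncomputable def binomCDF (n : ℕ) (q : ℝ) (k : ℕ) : ℝ :=
  ∑ i ∈ Finset.range (k + 1), (n.choose i : ℝ) * q ^ i * (1 - q) ^ (n - i)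

/-- Upper endpoint of the one-sided Clopper–Pearson interval at level 1 − p,
given observed count k out of n. -/
noncomputable def clopperPearsonUpper (n : ℕ) (k : ℕ) (p : ℝ) : ℝ :=
  sSup {q : ℝ | q ∈ Set.Icc (0 : ℝ) 1 ∧ p ≤ binomCDF n q k}

theorem clopper_pearson_coverage
    (n : ℕ) (hn : 0 < n) (pstar : ℝ) (hpstar : pstar ∈ Set.Icc (0 : ℝ) 1)
    (p : ℝ) (hp : p ∈ Set.Ioo (0 : ℝ) 1) :
    ∑ k ∈ Finset.range (n + 1),
      (if clopperPearsonUpper n k p < pstar then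
          (n.choose k : ℝ) * pstar ^ k * (1 - pstar) ^ (n - k)
        else 0) ≤ p := by
  have key : ∀ k, clopperPearsonUpper n k p < pstar → binomCDF n pstar k < p := by
    intro k h
    by_contra hcon
    push_neg at hcon
    have hmem : pstar ∈ {q : ℝ | q ∈ Set.Icc (0 : ℝ) 1 ∧ p ≤ binomCDF n q k} :=
      ⟨hpstar, hcon⟩
    have hbdd : BddAbove {q : ℝ | q ∈ Set.Icc (0 : ℝ) 1 ∧ p ≤ binomCDF n q k} :=
      ⟨1, fun x hx => hx.1.2⟩
    exact absurd (le_csSup hbdd hmem) (not_le.mpr h)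
  have hnn : ∀ k, (0 : ℝ) ≤ (n.choose k : ℝ) * pstar ^ k * (1 - pstar) ^ (n - k) := by
    intro k
    have h1 : (0 : ℝ) ≤ pstar ^ k := pow_nonneg hpstar.1 _
    have h2 : (0 : ℝ) ≤ (1 - pstar) ^ (n - k) := pow_nonneg (by linarith [hpstar.2]) _
    positivity
  rw [← Finset.sum_filter]
  set S := (Finset.range (n + 1)).filter (fun k => clopperPearsonUpper n k p < pstar) with hS
  rcases S.eq_empty_or_nonempty with h | h
  · rw [h, Finset.sum_empty]; exact le_of_lt hp.1
  · set K := S.max' h with hK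
    have hKmem : K ∈ S := S.max'_mem h
    have hKlt : clopperPearsonUpper n K p < pstar := (Finset.mem_filter.mp hKmem).2
    have hsub : S ⊆ Finset.range (K + 1) := by
      intro k hk
      exact Finset.mem_range.mpr (Nat.lt_succ_of_le (S.le_max' k hk))
    calc ∑ k ∈ S, (n.choose k : ℝ) * pstar ^ k * (1 - pstar) ^ (n - k)
        ≤ ∑ k ∈ Finset.range (K + 1), (n.choose k : ℝ) * pstar ^ k * (1 - pstar) ^ (n - k) :=
          Finset.sum_le_sum_of_subset_of_nonneg hsub (fun i _ _ => hnn i)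
      _ = binomCDF n pstar K := rfl
      _ ≤ p := le_of_lt (key K hKlt)
end
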